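/- Define ψ(κ) = (1/((1-κ)²/(κ²+(1-κ)²)·σ_ε²)) / (1/(σ_ω² + κ²/(κ²+(1-κ)²)·σ_ε²) + 1/((1-κ)²/(κ²+(1-κ)²)·σ_ε²)) for κ ∈ [0,1) and ψ(1)=1, where σ_ω², σ_ε² > 0. Then ψ is strictly increasing on [0,1], ψ(0) = (1/σ_ε²)/(1/σ_ω² + 1/σ_ε²) > 0, and ψ(κ) → 1 as κ → 1. -/

import Mathlib

private lemma dpos (κ : ℝ) : 0 < κ^2 + (1-κ)^2 := by nlinarith [sq_nonneg κ, sq_nonneg (1-κ), sq_nonneg (2*κ-1)]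

/-- properties of the conditional-expectation coefficient ψ(κ) in the LQN game. -/
theorem psi_properties (σω2 σε2 : ℝ) (hω : 0 < σω2) (hε : 0 < σε2)
    (ψ : ℝ → ℝ)
    (hψ : ∀ κ ∈ Set.Ico (0:ℝ) 1, ψ κ =
      (1 / ((1-κ)^2 / (κ^2 + (1-κ)^2) * σε2)) /
      (1 / (σω2 + κ^2 / (κ^2 + (1-κ)^2) * σε2) + 1 / ((1-κ)^2 / (κ^2 + (1-κ)^2) * σε2)))
    (hψ1 : ψ 1 = 1) :
    StrictMonoOn ψ (Set.Icc 0 1) ∧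
    ψ 0 = (1/σε2) / (1/σω2 + 1/σε2) ∧
    0 < ψ 0 ∧
    Filter.Tendsto ψ (nhdsWithin 1 (Set.Iio 1)) (nhds 1) := by
  set g : ℝ → ℝ := fun κ => (σω2 + σε2 * (κ^2 / (κ^2 + (1-κ)^2))) / (σω2 + σε2) with hg
  have hsum : (0:ℝ) < σω2 + σε2 := by linarith
  have hgeq : ∀ κ ∈ Set.Icc (0:ℝ) 1, ψ κ = g κ := by
    intro κ hκ
    rcases eq_or_lt_of_le hκ.2 with h1 | h1
    · subst h1
      simp only [hg, hψ1]
      norm_num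
      rw [div_self hsum.ne']
    · have hκ' : κ ∈ Set.Ico (0:ℝ) 1 := ⟨hκ.1, h1⟩
      rw [hψ κ hκ', hg]
      have hd : (0:ℝ) < κ^2 + (1-κ)^2 := dpos κ
      have h1κ : (0:ℝ) < (1-κ)^2 := by nlinarith
      have hA : (0:ℝ) < (1-κ)^2 / (κ^2 + (1-κ)^2) * σε2 := by positivity
      have hB : (0:ℝ) < σω2 + κ^2 / (κ^2 + (1-κ)^2) * σε2 := by positivity
      field_simp
      ring
  have hgmono : StrictMonoOn g (Set.Icc 0 1) := by
    intro a ha b hb hab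
    have hda := dpos a
    have hdb := dpos b
    have key : a^2 / (a^2 + (1-a)^2) < b^2 / (b^2 + (1-b)^2) := by
      rw [div_lt_div_iff₀ hda hdb]
      have h1 : a * (1-b) < b * (1-a) := by nlinarith [ha.1, hb.2]
      have h2 : 0 ≤ a * (1-b) := mul_nonneg ha.1 (by linarith [hb.2])
      nlinarith
    simp only [hg]
    rw [div_lt_div_iff_of_pos_right hsum]
    nlinarith [key]
  refine ⟨?_, ?_, ?_, ?_⟩
  · intro a ha b hb hab
    rw [hgeq a ha, hgeq b hb]
    exact hgmono ha hb hab
  · rw [hψ 0 (by constructor <;> norm_num)]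
    norm_num
  · rw [hψ 0 (by constructor <;> norm_num)]
    norm_num
    positivity
  · have hev : ψ =ᶠ[nhdsWithin 1 (Set.Iio 1)] g := by
      filter_upwards [self_mem_nhdsWithin,
        eventually_nhdsWithin_of_eventually_nhds
          (eventually_gt_nhds (by norm_num : (0:ℝ) < 1))] with κ h1 h0
      exact hgeq κ ⟨le_of_lt h0, le_of_lt h1⟩
    have hcont : Filter.Tendsto g (nhdsWithin 1 (Set.Iio 1)) (nhds (g 1)) := by
      have : ContinuousAt g 1 := by
        apply ContinuousAt.div
        · apply ContinuousAt.add continuousAt_const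
          apply ContinuousAt.mul continuousAt_const
          apply ContinuousAt.div (by fun_prop) (by fun_prop)
          exact ne_of_gt (dpos 1)
        · exact continuousAt_const
        · exact ne_of_gt hsum
      exact this.continuousWithinAt.tendsto
    have hg1 : g 1 = 1 := by
      simp only [hg]
      norm_num
      exact hsum.ne'
    rw [hg1] at hcont
    exact hcont.congr' hev.symm
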